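/- Let F(X,Y) = a_0 X^r + a_1 X^{r-1}Y + ⋯ + a_r Y^r be a binary form over a field of characteristic 0 with a_0 ≠ 0, and let θ^{(1)}, ..., θ^{(r)} be the roots of F(X,1). For m = 2, ..., r define ω_m := a_0 θ^{m-1} + a_1 θ^{m-2} + ⋯ + a_{m-2} θ (evaluated at a root θ). Fix distinct indices i, j and write ∏_{k≠i,j}(X - θ^{(k)}Y) = B_0 X^{r-2} + B_1 X^{r-3}Y + ⋯ + B_{r-2} Y^{r-2}. Then for every m = 2, ..., r one has ω_m^{(i)} - ω_m^{(j)} = a_0 · B_{m-2} · (θ^{(i)} - θ^{(j)}), where ω_m^{(i)} denotes ω_m evaluated at θ^{(i)}. -/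

import Mathlib

open Polynomial

/-- Let `F = a₀X^r + a₁X^(r-1)Y + ⋯ + a_rY^r` be a binary form over a field of
characteristic 0 with `a₀ ≠ 0`, whose dehomogenization `F(X,1)` splits with roots
`θ⁽¹⁾, …, θ⁽ʳ⁾`.  For `2 ≤ m ≤ r` set `ω_m(θ) = a₀θ^(m-1) + a₁θ^(m-2) + ⋯ + a_{m-2}θ`.
Fix distinct `i ≠ j` and write `∏_{l ≠ i,j} (X - θ⁽ˡ⁾) = B₀X^(r-2) + ⋯ + B_{r-2}`
(so `B_{m-2}` is the coefficient of `X^(r-m)`).  Then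
`ω_m(θ⁽ⁱ⁾) - ω_m(θ⁽ʲ⁾) = a₀ · B_{m-2} · (θ⁽ⁱ⁾ - θ⁽ʲ⁾)`. -/
theorem stmt5 {k : Type*} [Field k] [CharZero k] (r : ℕ) (hr : 2 ≤ r)
    (a : ℕ → k) (ha0 : a 0 ≠ 0) (θ : Fin r → k)
    (hsplit : (∑ n ∈ Finset.range (r + 1), C (a n) * X ^ (r - n))
      = C (a 0) * ∏ l : Fin r, (X - C (θ l)))
    (i j : Fin r) (hij : i ≠ j)
    (g : Polynomial k)
    (hg : g = ∏ l ∈ (Finset.univ.erase i).erase j, (X - C (θ l)))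
    (m : ℕ) (hm2 : 2 ≤ m) (hmr : m ≤ r) :
    (∑ n ∈ Finset.range (m - 1), a n * θ i ^ (m - 1 - n))
      - (∑ n ∈ Finset.range (m - 1), a n * θ j ^ (m - 1 - n))
    = a 0 * g.coeff (r - m) * (θ i - θ j) := by
  set f : Polynomial k := ∑ n ∈ Finset.range (r + 1), C (a n) * X ^ (r - n) with hf
  -- coefficient extraction from f
  have hcoef : ∀ n, n ≤ r → f.coeff (r - n) = a n := by
    intro n hn
    simp only [hf, finset_sum_coeff, coeff_C_mul, coeff_X_pow]
    rw [Finset.sum_eq_single n]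
    · simp
    · intro b hb hbn
      have hb' : b ≤ r := by simpa [Nat.lt_succ_iff] using hb
      have : ¬ (r - n = r - b) := by omega
      simp [this]
    · intro h
      exfalso; exact h (Finset.mem_range.mpr (by omega))
  -- key lemma
  have key : ∀ (i : Fin r) (s : ℕ), s ≤ r - 1 →
      a 0 * (∏ l ∈ Finset.univ.erase i, (X - C (θ l))).coeff (r - 1 - s)
        = ∑ n ∈ Finset.range (s + 1), a n * θ i ^ (s - n) := by
    intro i s
    set P : Polynomial k := ∏ l ∈ Finset.univ.erase i, (X - C (θ l)) with hP
    have hmon : P.Monic := monic_prod_of_monic _ _ fun l _ => monic_X_sub_C _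
    have hdeg : P.natDegree = r - 1 := by
      rw [hP, natDegree_prod_of_monic _ _ fun l _ => monic_X_sub_C _]
      simp [natDegree_X_sub_C, Finset.card_erase_of_mem (Finset.mem_univ i)]
    have hfP : f = C (a 0) * ((X - C (θ i)) * P) := by
      rw [hsplit, hP]
      exact congrArg (C (a 0) * ·)
        (Finset.mul_prod_erase Finset.univ (fun l => X - C (θ l)) (Finset.mem_univ i)).symm
    induction s with
    | zero =>
        intro _
        rw [Nat.sub_zero, ← hdeg, hmon.coeff_natDegree]
        simp
    | succ s ih =>
        intro hs
        have ih' := ih (by omega)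
        obtain ⟨u, hu⟩ : ∃ u, r = s + 2 + u := ⟨r - (s + 2), by omega⟩
        have h1 : r - 1 - s = u + 1 := by omega
        have h2 : r - 1 - (s + 1) = u := by omega
        have h3 : r - (s + 1) = u + 1 := by omega
        have hcs : a (s + 1) = f.coeff (u + 1) := by
          rw [← h3, hcoef (s + 1) (by omega)]
        rw [hfP] at hcs
        have hc2 : a (s + 1) = a 0 * (P.coeff u - θ i * P.coeff (u + 1)) := by
          rw [hcs]
          simp [sub_mul, coeff_sub, coeff_C_mul, coeff_X_mul]
        rw [h1] at ih'
        rw [h2]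
        have : a 0 * P.coeff u = a (s + 1) + θ i * (a 0 * P.coeff (u + 1)) := by
          rw [hc2]; ring
        rw [this, ih', Finset.mul_sum]
        have hterm : ∀ n ∈ Finset.range (s + 1),
            θ i * (a n * θ i ^ (s - n)) = a n * θ i ^ (s + 1 - n) := by
          intro n hn
          have hn' : n ≤ s := by simpa [Nat.lt_succ_iff] using Finset.mem_range.mp hn
          have : s + 1 - n = (s - n) + 1 := by omega
          rw [this, pow_succ]; ring
        rw [Finset.sum_congr rfl hterm]
        conv_rhs => rw [Finset.sum_range_succ]
        simp [add_comm]
  -- apply key with s = m - 1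
  have hki := key i (m - 1) (by omega)
  have hkj := key j (m - 1) (by omega)
  have hrm : r - 1 - (m - 1) = r - m := by omega
  rw [hrm] at hki hkj
  have hm : m - 1 + 1 = m := by omega
  rw [hm] at hki hkj
  -- ∑ range m = ∑ range (m-1) + a (m-1) * θ^0
  have hsum : ∀ t : k, ∑ n ∈ Finset.range m, a n * t ^ (m - 1 - n)
      = (∑ n ∈ Finset.range (m - 1), a n * t ^ (m - 1 - n)) + a (m - 1) := by
    intro t
    conv_lhs => rw [← hm, Finset.sum_range_succ]
    simp
  have hsi := hsum (θ i)
  have hsj := hsum (θ j)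
  -- replace m-1-n exponent: in key the exponent is (m-1) - n which matches
  rw [hsi] at hki
  rw [hsj] at hkj
  have hdiff : (∑ n ∈ Finset.range (m - 1), a n * θ i ^ (m - 1 - n))
      - (∑ n ∈ Finset.range (m - 1), a n * θ j ^ (m - 1 - n))
      = a 0 * ((∏ l ∈ Finset.univ.erase i, (X - C (θ l))).coeff (r - m)
        - (∏ l ∈ Finset.univ.erase j, (X - C (θ l))).coeff (r - m)) := by
    have := congrArg₂ (· - ·) hki hkj
    linear_combination -this
  rw [hdiff]
  -- factor: P_i = (X - C θj) * g, P_j = (X - C θi) * g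
  have hPi : (∏ l ∈ Finset.univ.erase i, (X - C (θ l))) = (X - C (θ j)) * g := by
    rw [hg]
    exact (Finset.mul_prod_erase (Finset.univ.erase i) (fun l => X - C (θ l))
      (Finset.mem_erase.mpr ⟨hij.symm, Finset.mem_univ j⟩)).symm
  have hPj : (∏ l ∈ Finset.univ.erase j, (X - C (θ l))) = (X - C (θ i)) * g := by
    rw [hg, Finset.erase_right_comm]
    exact (Finset.mul_prod_erase (Finset.univ.erase j) (fun l => X - C (θ l))
      (Finset.mem_erase.mpr ⟨hij, Finset.mem_univ i⟩)).symm
  rw [hPi, hPj, ← coeff_sub]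
  have : (X - C (θ j)) * g - (X - C (θ i)) * g = C (θ i - θ j) * g := by
    rw [map_sub]; ring
  rw [this, coeff_C_mul]
  ring
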